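/- Let q₁, …, q_m be a path in the output-aware parse tree tree(F, O) such that q_i is a child of q_{i−1} for each i ∈ {2, …, m}, and suppose ξ is an embedding of (F, O) in an acyclic hypergraph with witness join tree JT (rooted at the image of the root), such that ξ(q_i) is a descendant of ξ(q₁) in JT for each i ∈ {2, …, m−1}. Then ξ(q_i) is a descendant of ξ(q_{i−1}) in JT for each i ∈ {2, …, m}. -/

import Mathlib

/-- In a tree `G` rooted at `r`, `x` is a descendant of `y` iff `y` lies on every
path from `r` to `x`. -/
def Desc {V : Type} (G : SimpleGraph V) (r x y : V) : Prop :=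
  ∀ p : G.Path r x, y ∈ p.val.support

/-- `c` is a child of `p` in the tree `G` rooted at `r`. -/
def IsChild {V : Type} (G : SimpleGraph V) (r c p : V) : Prop :=
  G.Adj p c ∧ Desc G r c p

open SimpleGraph

lemma desc_of_mem {V : Type} {G : SimpleGraph V} (hG : G.IsAcyclic) {r x y : V}
    (P : G.Path r x) (h : y ∈ P.val.support) : Desc G r x y :=
  fun q => by rw [hG.path_unique q P]; exact h

/-- Mutual ancestors in a tree coincide. -/
lemma mutual_desc {V : Type} {G : SimpleGraph V} (hG : G.IsTree) {r x y : V}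
    (hxy : Desc G r x y) (hyx : Desc G r y x) : x = y := by
  classical
  obtain ⟨w⟩ := hG.isConnected.preconnected r x
  set P := w.toPath with hP
  have hy : y ∈ P.val.support := hxy P
  have hQ : (P.val.takeUntil y hy).IsPath := P.property.takeUntil hy
  have hx : x ∈ (P.val.takeUntil y hy).support := hyx ⟨_, hQ⟩
  have hnodup : P.val.support.Nodup := P.property.support_nodup
  rw [← P.val.take_spec hy, Walk.support_append] at hnodup
  rcases List.nodup_append'.mp hnodup with ⟨-, -, hdisj⟩
  have hxD : x ∈ (P.val.dropUntil y hy).support := Walk.end_mem_support _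
  rw [Walk.support_eq_cons] at hxD
  rcases List.mem_cons.mp hxD with h | h
  · exact h
  · exact absurd h (hdisj hx)

/-- A walk avoiding `z` yields reachability in the graph with `z` removed. -/
lemma avoid_walk {V : Type} (G : SimpleGraph V) (z : V) :
    ∀ {a b : V} (w : G.Walk a b), z ∉ w.support →
    ∀ (ha : a ≠ z) (hb : b ≠ z),
      (G.induce {v | v ≠ z}).Reachable ⟨a, ha⟩ ⟨b, hb⟩ := by
  intro a b w
  induction w with
  | nil =>
    intro _ ha hb
    exact Reachable.refl _
  | @cons a a' b h w' ih =>
    intro hz ha hb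
    have hz' : z ∉ w'.support := fun hm => hz (by simp [Walk.support_cons, hm])
    have ha' : a' ≠ z := fun e => hz' (e ▸ w'.start_mem_support)
    have hadj : (G.induce {v | v ≠ z}).Adj ⟨a, ha⟩ ⟨a', ha'⟩ := by
      simpa [SimpleGraph.comap] using h
    exact hadj.reachable.trans (ih hz' ha' hb)

/-- Key step: if `b` separates `a` from `c` in the tree `G`, and `b` is a descendant
of `a` (rooted at `r`), then `c` is a descendant of `b`. -/
lemma key_step {V : Type} {G : SimpleGraph V} (hG : G.IsTree) {r a b c : V}
    (hab : a ≠ b)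
    (hsep : ∀ w : G.Walk a c, b ∈ w.support)
    (hba : Desc G r b a) : Desc G r c b := by
  classical
  intro P
  by_contra hnb
  obtain ⟨wa⟩ := hG.isConnected.preconnected r a
  set Pa := wa.toPath with hPa
  by_cases hmem : b ∈ Pa.val.support
  · exact hab (mutual_desc hG (desc_of_mem hG.IsAcyclic Pa hmem) hba)
  · have hb := hsep (Pa.val.reverse.append P.val)
    rw [Walk.mem_support_append_iff] at hb
    rcases hb with hb | hb
    · rw [Walk.support_reverse] at hb
      exact hmem (List.mem_reverse.mp hb)
    · exact hnb hb

/-- Main induction along the tree path from the root of `PT`. -/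
lemma main_aux {VP VJ : Type} (PT : SimpleGraph VP) (hPT : PT.IsTree) (rp : VP)
    (JT : SimpleGraph VJ) (hJT : JT.IsTree)
    (ξ : VP → VJ) (hinj : Function.Injective ξ)
    (hcond2 : ∀ p q q', PT.Adj p q → PT.Adj p q' → q ≠ q' →
      ∀ (hq : ξ q ≠ ξ p) (hq' : ξ q' ≠ ξ p),
        ¬ (JT.induce {v | v ≠ ξ p}).Reachable ⟨ξ q, hq⟩ ⟨ξ q', hq'⟩) :
    ∀ (v x : VP) (w : PT.Walk v x), w.IsPath → x = rp →
      ∀ c, PT.Adj v c → Desc PT rp c v → Desc JT (ξ rp) (ξ c) (ξ v) := by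
  intro v x w
  induction w with
  | nil =>
    intro _ hx c _ _ p
    rw [hx]
    exact p.val.start_mem_support
  | @cons v u x h w' ih =>
    intro hw hx c hvc hdc
    subst x
    -- `u` is the parent of `v`
    have hpar : Desc PT rp v u := by
      intro p
      have hup : p = ⟨(Walk.cons h w').reverse, hw.reverse⟩ :=
        hPT.IsAcyclic.path_unique p _
      rw [hup]
      show u ∈ (Walk.cons h w').reverse.support
      rw [Walk.support_reverse, List.mem_reverse, Walk.support_cons]
      exact List.mem_cons.mpr (Or.inr w'.start_mem_support)
    have hvu : Desc JT (ξ rp) (ξ v) (ξ u) := ih hw.of_cons rfl v h.symm hpar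
    have huc : u ≠ c := by
      intro e
      subst e
      exact h.ne (mutual_desc hPT hpar hdc)
    have hqu : ξ u ≠ ξ v := fun e => h.ne' (hinj e)
    have hqc : ξ c ≠ ξ v := fun e => hvc.ne' (hinj e)
    have hsep : ∀ wj : JT.Walk (ξ u) (ξ c), ξ v ∈ wj.support := by
      intro wj
      by_contra hnb
      exact hcond2 v u c h hvc huc hqu hqc (avoid_walk JT (ξ v) wj hnb hqu hqc)
    exact key_step hJT hqu hsep hvu

theorem stmt7 {VP VJ α : Type} [Fintype VP] [Fintype VJ]
    (PT : SimpleGraph VP) (hPT : PT.IsTree) (rp : VP)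
    (JT : SimpleGraph VJ) (hJT : JT.IsTree)
    (χ : VJ → Finset α) (τ : VP → Finset α)
    (ξ : VP → VJ) (hinj : Function.Injective ξ)
    (hcond1 : ∀ p, τ p ⊆ χ (ξ p))
    (hcond2 : ∀ p q q', PT.Adj p q → PT.Adj p q' → q ≠ q' →
      ∀ (hq : ξ q ≠ ξ p) (hq' : ξ q' ≠ ξ p),
        ¬ (JT.induce {v | v ≠ ξ p}).Reachable ⟨ξ q, hq⟩ ⟨ξ q', hq'⟩)
    (m : ℕ) (q : Fin (m + 1) → VP)
    (hchild : ∀ i : Fin m, IsChild PT rp (q i.succ) (q i.castSucc))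
    (hdesc : ∀ i : Fin (m + 1), 1 ≤ (i : ℕ) → (i : ℕ) < m →
      Desc JT (ξ rp) (ξ (q i)) (ξ (q 0))) :
    ∀ i : Fin m, Desc JT (ξ rp) (ξ (q i.succ)) (ξ (q i.castSucc)) := by
  classical
  intro i
  obtain ⟨hadj, hdesc'⟩ := hchild i
  obtain ⟨w⟩ := hPT.isConnected.preconnected (q i.castSucc) rp
  exact main_aux PT hPT rp JT hJT ξ hinj hcond2 _ _ w.toPath.val w.toPath.property rfl _ hadj hdesc'
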